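/- In a hyperbolic circular triangle OAB with vertex O at the origin, straight sides OA (on the positive real axis, of length x) and OB making angle πα at O, and third side an arc of a circle meeting OA at angle πβ and OB at angle πγ with α + β + γ < 1, the radius R of the circle centered at O orthogonal to all three sides satisfies R² = x² · [sin(π(1-α+β-γ)/2) sin(π(1-α+β+γ)/2)] / [sin(π(1-α-β+γ)/2) sin(π(1-α-β-γ)/2)]. -/
import Mathlib


open Real

theorem orthogonal_circle_radius (α β γ x r R : ℝ)
    (hα : 0 < α) (hβ : 0 < β) (hγ : 0 < γ) (hsum : α + β + γ < 1) (hx : 0 < x)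
    (hr : r = x * Real.sin (π * α)
        / (2 * Real.cos (π * (α + β - γ) / 2) * Real.cos (π * (α + β + γ) / 2)))
    (hR : R ^ 2 = (x ^ 2 + r ^ 2 + 2 * r * x * Real.sin (π * β)) - r ^ 2) :
    R ^ 2 = x ^ 2 * (Real.sin (π * (1 - α + β - γ) / 2) * Real.sin (π * (1 - α + β + γ) / 2))
      / (Real.sin (π * (1 - α - β + γ) / 2) * Real.sin (π * (1 - α - β - γ) / 2)) := by
  have hpi := Real.pi_pos
  -- rewrite the sines in the goal as cosines
  rw [show π * (1 - α + β - γ) / 2 = π / 2 - π * (α - β + γ) / 2 by ring,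
      show π * (1 - α + β + γ) / 2 = π / 2 - π * (α - β - γ) / 2 by ring,
      show π * (1 - α - β + γ) / 2 = π / 2 - π * (α + β - γ) / 2 by ring,
      show π * (1 - α - β - γ) / 2 = π / 2 - π * (α + β + γ) / 2 by ring,
      Real.sin_pi_div_two_sub, Real.sin_pi_div_two_sub,
      Real.sin_pi_div_two_sub, Real.sin_pi_div_two_sub]
  have hc1 : 0 < Real.cos (π * (α + β - γ) / 2) := by
    apply Real.cos_pos_of_mem_Ioo
    constructor <;> [nlinarith; nlinarith]
  have hc2 : 0 < Real.cos (π * (α + β + γ) / 2) := by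
    apply Real.cos_pos_of_mem_Ioo
    constructor <;> [nlinarith; nlinarith]
  -- key trig identity
  have e1 := Real.cos_add_cos (π * (α + β)) (π * γ)
  have e2 := Real.cos_add_cos (π * (α - β)) (π * γ)
  have e3 := Real.cos_sub_cos (π * (α - β)) (π * (α + β))
  rw [show (π * (α + β) + π * γ) / 2 = π * (α + β + γ) / 2 by ring,
      show (π * (α + β) - π * γ) / 2 = π * (α + β - γ) / 2 by ring] at e1
  rw [show (π * (α - β) + π * γ) / 2 = π * (α - β + γ) / 2 by ring,
      show (π * (α - β) - π * γ) / 2 = π * (α - β - γ) / 2 by ring] at e2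
  rw [show (π * (α - β) + π * (α + β)) / 2 = π * α by ring,
      show (π * (α - β) - π * (α + β)) / 2 = -(π * β) by ring, Real.sin_neg] at e3
  have key : Real.cos (π * (α + β - γ) / 2) * Real.cos (π * (α + β + γ) / 2)
      + Real.sin (π * α) * Real.sin (π * β)
      = Real.cos (π * (α - β + γ) / 2) * Real.cos (π * (α - β - γ) / 2) := by
    nlinarith [e1, e2, e3]
  have hrr : r * (2 * Real.cos (π * (α + β - γ) / 2) * Real.cos (π * (α + β + γ) / 2))
      = x * Real.sin (π * α) := by
    rw [hr]; field_simp
  rw [eq_div_iff (by positivity)]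
  linear_combination (Real.cos (π * (α + β - γ) / 2) * Real.cos (π * (α + β + γ) / 2)) * hR + x * Real.sin (π * β) * hrr + x ^ 2 * key
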